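/- On {p₁ − q₁ > 0} ⊂ ℝ⁴, the functions X₁, Y₁ (as above) and B = (1/2)(p₂² + q₂²) satisfy the harmonic-oscillator Lie algebra relations with respect to the Poisson bracket: {X₁, Y₁} = 1, {B, X₁} = Y₁ (up to sign conventions: {X₁, B} = −Y₁) and {Y₁, B} = X₁; in particular the span of {X₁, Y₁, B, 1} is closed under the Poisson bracket. -/

import Mathlib

/-- The Poisson bracket on ℝ⁴ with coordinates (q₁, q₂, p₁, p₂). -/
noncomputable def poissonBracket (f g : ℝ → ℝ → ℝ → ℝ → ℝ)
    (q1 q2 p1 p2 : ℝ) : ℝ :=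
    deriv (fun x => f x q2 p1 p2) q1 * deriv (fun x => g q1 q2 x p2) p1
  - deriv (fun x => f q1 q2 x p2) p1 * deriv (fun x => g x q2 p1 p2) q1
  + deriv (fun x => f q1 x p1 p2) q2 * deriv (fun x => g q1 q2 p1 x) p2
  - deriv (fun x => f q1 q2 p1 x) p2 * deriv (fun x => g q1 x p1 p2) q2

/-- On `{p₁ − q₁ > 0}`, the functions `X₁`, `Y₁` and
`B = (1/2)(p₂² + q₂²)` satisfy the harmonic-oscillator Lie algebra relations
`{X₁, Y₁} = 1`, `{X₁, B} = Y₁`, `{Y₁, B} = −X₁` (signs fixed by computation);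
in particular the span of `{X₁, Y₁, B, 1}` is closed under the Poisson
bracket. -/
theorem stmt14 :
    let X1 : ℝ → ℝ → ℝ → ℝ → ℝ := fun q1 q2 p1 p2 =>
      q2 * Real.cos (Real.log (p1 - q1)) - p2 * Real.sin (Real.log (p1 - q1))
    let Y1 : ℝ → ℝ → ℝ → ℝ → ℝ := fun q1 q2 p1 p2 =>
      q2 * Real.sin (Real.log (p1 - q1)) + p2 * Real.cos (Real.log (p1 - q1))
    let B : ℝ → ℝ → ℝ → ℝ → ℝ := fun _ q2 _ p2 => (1/2) * (p2^2 + q2^2)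
    ∀ q1 q2 p1 p2 : ℝ, p1 - q1 > 0 →
      poissonBracket X1 Y1 q1 q2 p1 p2 = 1 ∧
      poissonBracket X1 B q1 q2 p1 p2 = Y1 q1 q2 p1 p2 ∧
      poissonBracket Y1 B q1 q2 p1 p2 = -(X1 q1 q2 p1 p2) := by
  intro X1 Y1 B q1 q2 p1 p2 h
  have hr : p1 - q1 ≠ 0 := ne_of_gt h
  set r : ℝ := p1 - q1 with hrdef
  set T : ℝ := Real.log r with hT
  -- inner derivative wrt q1
  have hlog_q1 : HasDerivAt (fun x : ℝ => Real.log (p1 - x)) (-(1 / r)) q1 := by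
    have h1 : HasDerivAt (fun x : ℝ => p1 - x) (-1) q1 := by
      simpa using (hasDerivAt_id q1).const_sub p1
    have h2 := (Real.hasDerivAt_log hr).comp q1 h1
    simpa [hrdef, Function.comp_def] using h2.congr_deriv (by ring)
  -- inner derivative wrt p1
  have hlog_p1 : HasDerivAt (fun x : ℝ => Real.log (x - q1)) (1 / r) p1 := by
    have h1 : HasDerivAt (fun x : ℝ => x - q1) 1 p1 := by
      simpa using (hasDerivAt_id p1).sub_const q1
    have h2 := (Real.hasDerivAt_log hr).comp p1 h1
    simpa [hrdef, Function.comp_def] using h2.congr_deriv (by ring)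
  have hcos_q1 : HasDerivAt (fun x : ℝ => Real.cos (Real.log (p1 - x)))
      (Real.sin T * (1 / r)) q1 := by
    have := (Real.hasDerivAt_cos T).comp q1 hlog_q1
    simpa [hT, Function.comp_def] using this.congr_deriv (by ring)
  have hsin_q1 : HasDerivAt (fun x : ℝ => Real.sin (Real.log (p1 - x)))
      (-(Real.cos T * (1 / r))) q1 := by
    have := (Real.hasDerivAt_sin T).comp q1 hlog_q1
    simpa [hT, Function.comp_def] using this.congr_deriv (by ring)
  have hcos_p1 : HasDerivAt (fun x : ℝ => Real.cos (Real.log (x - q1)))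
      (-(Real.sin T * (1 / r))) p1 := by
    have := (Real.hasDerivAt_cos T).comp p1 hlog_p1
    simpa [hT, Function.comp_def] using this.congr_deriv (by ring)
  have hsin_p1 : HasDerivAt (fun x : ℝ => Real.sin (Real.log (x - q1)))
      (Real.cos T * (1 / r)) p1 := by
    have := (Real.hasDerivAt_sin T).comp p1 hlog_p1
    simpa [hT, Function.comp_def] using this.congr_deriv (by ring)
  -- derivatives of X1
  have hX_q1 : deriv (fun x => X1 x q2 p1 p2) q1
      = (q2 * Real.sin T + p2 * Real.cos T) * (1 / r) := by
    have := ((hcos_q1.const_mul q2).sub (hsin_q1.const_mul p2)).deriv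
    simp only [X1, Pi.sub_def] at *
    rw [this]; ring
  have hX_p1 : deriv (fun x => X1 q1 q2 x p2) p1
      = -((q2 * Real.sin T + p2 * Real.cos T) * (1 / r)) := by
    have := ((hcos_p1.const_mul q2).sub (hsin_p1.const_mul p2)).deriv
    simp only [X1, Pi.sub_def] at *
    rw [this]; ring
  have hX_q2 : deriv (fun x => X1 q1 x p1 p2) q2 = Real.cos T := by
    have : HasDerivAt (fun x : ℝ => x * Real.cos T - p2 * Real.sin T)
        (Real.cos T) q2 := by
      simpa using ((hasDerivAt_id q2).mul_const (Real.cos T)).sub_const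
        (p2 * Real.sin T)
    simpa [X1, hT, hrdef] using this.deriv
  have hX_p2 : deriv (fun x => X1 q1 q2 p1 x) p2 = -Real.sin T := by
    have : HasDerivAt (fun x : ℝ => q2 * Real.cos T - x * Real.sin T)
        (-Real.sin T) p2 := by
      simpa [Pi.sub_def] using (hasDerivAt_const p2 (q2 * Real.cos T)).sub
        ((hasDerivAt_id p2).mul_const (Real.sin T))
    simpa [X1, hT, hrdef] using this.deriv
  -- derivatives of Y1
  have hY_q1 : deriv (fun x => Y1 x q2 p1 p2) q1
      = -((q2 * Real.cos T - p2 * Real.sin T) * (1 / r)) := by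
    have := ((hsin_q1.const_mul q2).add (hcos_q1.const_mul p2)).deriv
    simp only [Y1, Pi.add_def] at *
    rw [this]; ring
  have hY_p1 : deriv (fun x => Y1 q1 q2 x p2) p1
      = (q2 * Real.cos T - p2 * Real.sin T) * (1 / r) := by
    have := ((hsin_p1.const_mul q2).add (hcos_p1.const_mul p2)).deriv
    simp only [Y1, Pi.add_def] at *
    rw [this]; ring
  have hY_q2 : deriv (fun x => Y1 q1 x p1 p2) q2 = Real.sin T := by
    have : HasDerivAt (fun x : ℝ => x * Real.sin T + p2 * Real.cos T)
        (Real.sin T) q2 := by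
      simpa using ((hasDerivAt_id q2).mul_const (Real.sin T)).add_const
        (p2 * Real.cos T)
    simpa [Y1, hT, hrdef] using this.deriv
  have hY_p2 : deriv (fun x => Y1 q1 q2 p1 x) p2 = Real.cos T := by
    have : HasDerivAt (fun x : ℝ => q2 * Real.sin T + x * Real.cos T)
        (Real.cos T) p2 := by
      simpa [Pi.add_def] using (hasDerivAt_const p2 (q2 * Real.sin T)).add
        ((hasDerivAt_id p2).mul_const (Real.cos T))
    simpa [Y1, hT, hrdef] using this.deriv
  -- derivatives of B
  have hB_q1 : deriv (fun x => B x q2 p1 p2) q1 = 0 := by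
    simp [B]
  have hB_p1 : deriv (fun x => B q1 q2 x p2) p1 = 0 := by
    simp [B]
  have hB_q2 : deriv (fun x => B q1 x p1 p2) q2 = q2 := by
    have : HasDerivAt (fun x : ℝ => (1/2 : ℝ) * (p2^2 + x^2)) q2 q2 := by
      have h1 : HasDerivAt (fun x : ℝ => x ^ 2) (2 * q2) q2 := by
        simpa using hasDerivAt_pow 2 q2
      simpa using ((h1.const_add (p2^2)).const_mul (1/2 : ℝ)).congr_deriv
        (by ring)
    simpa [B] using this.deriv
  have hB_p2 : deriv (fun x => B q1 q2 p1 x) p2 = p2 := by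
    have : HasDerivAt (fun x : ℝ => (1/2 : ℝ) * (x^2 + q2^2)) p2 p2 := by
      have h1 : HasDerivAt (fun x : ℝ => x ^ 2) (2 * p2) p2 := by
        simpa using hasDerivAt_pow 2 p2
      simpa using ((h1.add_const (q2^2)).const_mul (1/2 : ℝ)).congr_deriv
        (by ring)
    simpa [B] using this.deriv
  have hs : Real.sin T ^ 2 + Real.cos T ^ 2 = 1 := Real.sin_sq_add_cos_sq T
  refine ⟨?_, ?_, ?_⟩
  · rw [poissonBracket, hX_q1, hX_p1, hX_q2, hX_p2, hY_q1, hY_p1, hY_q2, hY_p2]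
    field_simp
    nlinarith [hs, sq_nonneg r]
  · rw [poissonBracket, hX_q1, hX_p2, hX_q2, hB_q1, hB_p1, hB_q2, hB_p2]
    simp only [Y1, ← hT, ← hrdef]
    ring
  · rw [poissonBracket, hY_q1, hY_p2, hY_q2, hB_q1, hB_p1, hB_q2, hB_p2]
    simp only [X1, ← hT, ← hrdef]
    ring
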